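/- Let A be a tensor of order m and dimension n with characteristic polynomial φ_A(λ) = Σ_{d=0}^{D} a_d λ^{D−d}, D = n(m−1)^{n−1}. Then A is spectral ℓ-symmetric if and only if a_d = 0 whenever ℓ ∤ d, i.e., φ_A(λ) = λ^t f(λ^ℓ) for some t ≥ 0 and polynomial f. -/

import Mathlib

open BigOperators

/-- An order-`m`, dimension-`n` real tensor (hypermatrix). -/
abbrev Tensor (m n : ℕ) : Type := (Fin m → Fin n) → ℝ

/-- The primitive rotation `e^{i·2π/k}` of the complex plane. -/
noncomputable def rot (k : ℕ) : ℂ := Complex.exp (2 * (Real.pi : ℂ) * Complex.I / (k : ℂ))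

/-- A tensor is nonnegative if all its entries are nonnegative. -/
def Tensor.Nonneg {m n : ℕ} (A : Tensor m n) : Prop := ∀ α, 0 ≤ A α

/-- A tensor is symmetric if its entries are invariant under permutations of indices. -/
def Tensor.Symm {m n : ℕ} (A : Tensor m n) : Prop :=
  ∀ (σ : Equiv.Perm (Fin m)) (α : Fin m → Fin n), A (α ∘ σ) = A α

/-- Arc `(i,j)` of the digraph associated to `A`: some entry `a_{i i₂ … i_m} ≠ 0`
with `j` among the later indices. -/
def Tensor.Arc {m n : ℕ} [NeZero m] (A : Tensor m n) (i j : Fin n) : Prop :=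
  ∃ α : Fin m → Fin n, A α ≠ 0 ∧ α 0 = i ∧ ∃ k : Fin m, k ≠ 0 ∧ α k = j

/-- `A` is weakly irreducible if its associated digraph is strongly connected. -/
def Tensor.WeaklyIrreducible {m n : ℕ} [NeZero m] (A : Tensor m n) : Prop :=
  ∀ i j : Fin n, Relation.ReflTransGen A.Arc i j

/-- The eigenvalue equations `(A x^{m-1})_i = λ x_i^{m-1}` for all `i`. -/
def Tensor.EigEq {m n : ℕ} [NeZero m] (A : Tensor m n) (lam : ℂ) (x : Fin n → ℂ) : Prop :=
  ∀ i : Fin n,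
    (∑ α : Fin m → Fin n,
      if α 0 = i then (A α : ℂ) * ∏ k ∈ Finset.univ.erase (0 : Fin m), x (α k) else 0)
    = lam * x i ^ (m - 1)

/-- `lam` is an eigenvalue of the tensor `A`. -/
def Tensor.IsEig {m n : ℕ} [NeZero m] (A : Tensor m n) (lam : ℂ) : Prop :=
  ∃ x : Fin n → ℂ, x ≠ 0 ∧ A.EigEq lam x

/-- `A` is spectral `ℓ`-symmetric: its spectrum is invariant under rotation by `e^{i2π/ℓ}`. -/
def Tensor.SpectralSym {m n : ℕ} [NeZero m] (ℓ : ℕ) (A : Tensor m n) : Prop :=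
  ∀ lam : ℂ, A.IsEig lam ↔ A.IsEig (rot ℓ * lam)

/-- `A = e^{-iθ} D^{-(m-1)} A D` for the diagonal matrix `D = diag d`, entrywise. -/
def Tensor.DiagSim {m n : ℕ} [NeZero m] (A : Tensor m n) (θ : ℝ) (d : Fin n → ℂ) : Prop :=
  ∀ α : Fin m → Fin n,
    (A α : ℂ) = Complex.exp (-(θ : ℂ) * Complex.I) * d (α 0) ^ (-((m : ℤ) - 1)) * (A α : ℂ) *
      ∏ k ∈ Finset.univ.erase (0 : Fin m), d (α k)

/-- The set `𝔇^{(j)}` of normalized unimodular diagonal matrices `D` with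
`A = e^{-i2πj/ℓ} D^{-(m-1)} A D`. -/
def Tensor.DSet {m n : ℕ} [NeZero m] [NeZero n] (A : Tensor m n) (ℓ j : ℕ) :
    Set (Fin n → ℂ) :=
  {d | d 0 = 1 ∧ (∀ i, ‖d i‖ = 1) ∧ A.DiagSim (2 * Real.pi * j / ℓ) d}

/-- The set `𝔇 = ⋃_{j=0}^{ℓ-1} 𝔇^{(j)}`. -/
def Tensor.DFull {m n : ℕ} [NeZero m] [NeZero n] (A : Tensor m n) (ℓ : ℕ) :
    Set (Fin n → ℂ) :=
  ⋃ j ∈ Finset.range ℓ, A.DSet ℓ j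

/-- An `m`-uniform hypergraph on vertex set `Fin n`. -/
structure UniformHypergraph (m n : ℕ) where
  edges : Finset (Finset (Fin n))
  uniform : ∀ e ∈ edges, e.card = m

/-- The adjacency tensor of an `m`-uniform hypergraph. -/
noncomputable def UniformHypergraph.adjTensor {m n : ℕ} (G : UniformHypergraph m n) : Tensor m n :=
  fun α => if Finset.image α Finset.univ ∈ G.edges then (1 : ℝ) / (m - 1).factorial else 0

/-- A hypergraph is connected if every two vertices are joined by a walk. -/
def UniformHypergraph.Connected {m n : ℕ} (G : UniformHypergraph m n) : Prop :=
  ∀ i j : Fin n, Relation.ReflTransGen (fun u v => ∃ e ∈ G.edges, u ∈ e ∧ v ∈ e) i j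


open Polynomial in
lemma scaleRoots_X_sub_C_aux (a s : ℂ) : (X - C a).scaleRoots s = X - C (s * a) := by
  ext i
  rcases i with _ | _ | i
  · simp [coeff_scaleRoots, natDegree_X_sub_C, mul_comm]
  · simp [coeff_scaleRoots, natDegree_X_sub_C]
  · simp [coeff_scaleRoots, natDegree_X_sub_C, coeff_X, coeff_C,
      coeff_eq_zero_of_natDegree_lt (show (X - C a).natDegree < i + 2 by
        simp [natDegree_X_sub_C])]

open Polynomial in
lemma roots_scaleRoots_monic_aux (p : Polynomial ℂ) (hp : p.Monic) (s : ℂ) :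
    (p.scaleRoots s).roots = p.roots.map (fun z => s * z) := by
  have hsplit := (IsAlgClosed.splits p).eq_prod_roots_of_monic hp
  have key : ∀ (t : Multiset ℂ),
      ((t.map fun a => X - C a).prod).scaleRoots s = (t.map fun a => X - C (s * a)).prod := by
    intro t
    induction t using Multiset.induction with
    | empty => ext i; simp [coeff_scaleRoots]
    | cons a t ih =>
      simp only [Multiset.map_cons, Multiset.prod_cons,
        mul_scaleRoots_of_noZeroDivisors, ih, scaleRoots_X_sub_C_aux]
  conv_lhs => rw [hsplit, key]
  rw [show ((p.roots.map fun a => X - C (s * a)).prod) =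
      (((p.roots.map fun z => s * z)).map fun a => X - C a).prod by
    rw [Multiset.map_map]; rfl]
  exact roots_multiset_prod_X_sub_C _

/-- with `χ` the characteristic polynomial of the tensor `A` (monic of degree
`D = n(m-1)^{n-1}`, whose roots are exactly the eigenvalues of `A`), `A` is spectral
`ℓ`-symmetric iff `a_d = 0` whenever `ℓ ∤ d` (writing `χ(λ) = Σ_d a_d λ^{D-d}`). -/
theorem stmt13 {m n ℓ : ℕ} [NeZero m] [NeZero n] (hℓ : 0 < ℓ) (A : Tensor m n)
    (χ : Polynomial ℂ) (hmon : χ.Monic)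
    (hdeg : χ.natDegree = n * (m - 1) ^ (n - 1))
    (hroots : ∀ lam : ℂ, lam ∈ χ.roots ↔ A.IsEig lam) :
    (χ.roots.map (fun z => rot ℓ * z) = χ.roots) ↔
      ∀ d ≤ n * (m - 1) ^ (n - 1), ¬ (ℓ ∣ d) →
        χ.coeff (n * (m - 1) ^ (n - 1) - d) = 0 := by
  have hprim : IsPrimitiveRoot (rot ℓ) ℓ := by
    have := Complex.isPrimitiveRoot_exp ℓ hℓ.ne'
    simpa [rot] using this
  set D := n * (m - 1) ^ (n - 1) with hD
  set ε := rot ℓ with hε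
  have hiff : (χ.roots.map (fun z => ε * z) = χ.roots) ↔ χ.scaleRoots ε = χ := by
    constructor
    · intro h
      have h1 : (χ.scaleRoots ε).Monic := (Polynomial.monic_scaleRoots_iff ε).mpr hmon
      have h2 := (IsAlgClosed.splits _).eq_prod_roots_of_monic h1
      have h3 := (IsAlgClosed.splits χ).eq_prod_roots_of_monic hmon
      rw [h2, roots_scaleRoots_monic_aux χ hmon ε, h, ← h3]
    · intro h
      conv_lhs => rw [← roots_scaleRoots_monic_aux χ hmon ε, h]
  rw [hiff]
  constructor
  · intro h d hd hnd
    have hc := congrArg (fun p => Polynomial.coeff p (D - d)) h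
    simp only [Polynomial.coeff_scaleRoots, hdeg] at hc
    rw [Nat.sub_sub_self hd] at hc
    by_contra hne
    have h1 : ε ^ d = 1 := by
      have := mul_left_cancel₀ hne (hc.trans (mul_one _).symm)
      exact this
    exact hnd ((hprim.pow_eq_one_iff_dvd d).mp h1)
  · intro h
    ext i
    rw [Polynomial.coeff_scaleRoots, hdeg]
    rcases le_or_gt i D with hi | hi
    · by_cases hdvd : ℓ ∣ D - i
      · rw [(hprim.pow_eq_one_iff_dvd _).mpr hdvd, mul_one]
      · have := h (D - i) (Nat.sub_le _ _) hdvd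
        rw [Nat.sub_sub_self hi] at this
        rw [this, zero_mul]
    · rw [Polynomial.coeff_eq_zero_of_natDegree_lt (hdeg ▸ hi), zero_mul]
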